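/- Let $c:\mathbb{Z}\to\mathbb{C}$ be arbitrary and define $\psi^n_N=\det(c_{n-i+j})_{i,j=1,\dots,N}$ for $N>0$, $\psi^n_0=1$, $\psi^n_N=0$ for $N<0$. Then the discrete Toda equation $\psi^n_{N+1}\psi^n_{N-1}-(\psi^n_N)^2+\psi^{n+1}_N\psi^{n-1}_N=0$ holds for all $n\in\mathbb{Z}$ and $N\geq 0$. -/

import Mathlib

open Matrix

/-- Equivalence putting the two "corner" indices `0` and `last` first. -/
def cornerEquiv (n : ℕ) : Fin 2 ⊕ Fin n ≃ Fin (n + 2) where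
  toFun := Sum.elim (fun i => if i = 0 then 0 else Fin.last (n + 1))
    (fun k => k.succ.castSucc)
  invFun j :=
    if h0 : j = 0 then .inl 0
    else if hl : j = Fin.last (n + 1) then .inl 1
    else .inr ⟨j.val - 1, by
      have h1 : j.val ≠ 0 := fun h => h0 (Fin.ext h)
      have h2 : j.val ≠ n + 1 := fun h => hl (Fin.ext h)
      have := j.isLt; omega⟩
  left_inv := by
    rintro (i | k)
    · by_cases hi : i = 0
      · subst hi; simp
      · have hi1 : i = 1 := by
          have := i.isLt
          rw [Fin.ext_iff] at hi ⊢
          omega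
        subst hi1
        simp only [Sum.elim_inl, if_neg (by decide : ¬(1 : Fin 2) = 0)]
        rw [dif_neg (by simp [Fin.ext_iff])]; simp
    · simp only [Sum.elim_inr]
      have hk := k.isLt
      split_ifs with h1 h2 <;> simp [Fin.ext_iff] at * <;> omega
  right_inv := by
    intro j
    by_cases h0 : j = 0
    · subst h0; simp
    · by_cases hl : j = Fin.last (n + 1)
      · subst hl
        simp [dif_neg h0, (by decide : ¬(1 : Fin 2) = 0)]
      · simp only [dif_neg h0, dif_neg hl, Sum.elim_inr]
        have h1 : j.val ≠ 0 := fun h => h0 (Fin.ext h)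
        have := j.isLt
        simp [Fin.ext_iff]; omega

@[simp] lemma cornerEquiv_inl0 (n : ℕ) : cornerEquiv n (.inl 0) = 0 := rfl
@[simp] lemma cornerEquiv_inl1 (n : ℕ) : cornerEquiv n (.inl 1) = Fin.last (n + 1) := by
  simp [cornerEquiv]
@[simp] lemma cornerEquiv_inr (n : ℕ) (k : Fin n) :
    cornerEquiv n (.inr k) = k.succ.castSucc := rfl


section DJ
variable {R : Type*} [CommRing R] (n : ℕ)

lemma dj_mul (A : Matrix (Fin (n + 2)) (Fin (n + 2)) R) :
    A.det * (A.det *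
      (A.submatrix (fun k : Fin n => k.succ.castSucc) (fun k : Fin n => k.succ.castSucc)).det) =
    A.det * ((A.submatrix Fin.castSucc Fin.castSucc).det * (A.submatrix Fin.succ Fin.succ).det
      - (A.submatrix Fin.castSucc Fin.succ).det * (A.submatrix Fin.succ Fin.castSucc).det) := by
  set l : Fin (n + 2) := Fin.last (n + 1) with hl
  have hl0 : l ≠ 0 := by simp [hl, Fin.ext_iff]
  have hmid0 : ∀ k : Fin n, k.succ.castSucc ≠ 0 := by
    intro k; simp [Fin.ext_iff]
  have hmidl : ∀ k : Fin n, k.succ.castSucc ≠ l := by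
    intro k; have := k.isLt; simp [hl, Fin.ext_iff]; omega
  set B : Matrix (Fin (n + 2)) (Fin (n + 2)) R := Matrix.of fun i j =>
    if j = 0 then A.adjugate i 0 else if j = l then A.adjugate i l
    else if i = j then 1 else 0 with hB
  set C : Matrix (Fin (n + 2)) (Fin (n + 2)) R := Matrix.of fun i j =>
    if j = 0 then (if i = 0 then 1 else 0) else if j = l then (if i = l then 1 else 0)
    else A i j with hC
  set d : Fin (n + 2) → R := fun j => if j = 0 then A.det else if j = l then A.det else 1
    with hd
  have hAB : A * B = C * Matrix.diagonal d := by
    ext i j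
    rw [Matrix.mul_diagonal, Matrix.mul_apply]
    rcases eq_or_ne j 0 with rfl | hj0
    · simp only [hB, hC, hd, Matrix.of_apply, if_pos rfl, if_true, eq_self_iff_true]
      rw [← Matrix.mul_apply, Matrix.mul_adjugate]
      by_cases hi : i = 0 <;> simp [hi, Matrix.one_apply, mul_comm]
    · rcases eq_or_ne j l with rfl | hjl
      · simp only [hB, hC, hd, Matrix.of_apply, if_neg hl0, if_pos rfl, if_true,
          eq_self_iff_true]
        rw [← Matrix.mul_apply, Matrix.mul_adjugate]
        by_cases hi : i = l <;> simp [hi, Matrix.one_apply, hl0, mul_comm]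
      · simp only [hB, hC, hd, Matrix.of_apply, if_neg hj0, if_neg hjl]
        rw [mul_one]
        simp [mul_ite, Finset.sum_ite_eq']
  have hblockB : B.submatrix (cornerEquiv n) (cornerEquiv n) =
      Matrix.fromBlocks
        !![A.adjugate 0 0, A.adjugate 0 l; A.adjugate l 0, A.adjugate l l]
        0
        (Matrix.of fun (k : Fin n) (i : Fin 2) =>
          B (cornerEquiv n (.inr k)) (cornerEquiv n (.inl i)))
        1 := by
    ext x y
    rcases x with i | k <;> rcases y with j | m
    · fin_cases i <;> fin_cases j <;>
        simp [hB, hl0, Ne.symm hl0, ← hl]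
    · fin_cases i <;>
        simp [hB, hmid0, hmidl, (hmid0 m).symm, (hmidl m).symm, hl0, Ne.symm (hmid0 m),
          Ne.symm (hmidl m), ← hl, -Fin.castSucc_succ]
    · rfl
    · simp only [Matrix.submatrix_apply, cornerEquiv_inr, Matrix.fromBlocks_apply₂₂, hB,
        Matrix.of_apply, if_neg (hmid0 m), if_neg (hmidl m), Matrix.one_apply,
        Fin.castSucc_inj, Fin.succ_inj]
  have hdetB : B.det =
      (A.submatrix Fin.succ Fin.succ).det * (A.submatrix Fin.castSucc Fin.castSucc).det
      - (A.submatrix Fin.castSucc Fin.succ).det * (A.submatrix Fin.succ Fin.castSucc).det := by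
    rw [← Matrix.det_submatrix_equiv_self (cornerEquiv n) B, hblockB,
      Matrix.det_fromBlocks_zero₁₂, Matrix.det_one, mul_one, Matrix.det_fin_two]
    simp only [Matrix.cons_val', Matrix.cons_val_zero, Matrix.cons_val_one, Matrix.head_cons,
      Matrix.head_fin_const, Matrix.empty_val', Matrix.cons_val_fin_one, Matrix.of_apply]
    rw [Matrix.adjugate_fin_succ_eq_det_submatrix, Matrix.adjugate_fin_succ_eq_det_submatrix,
      Matrix.adjugate_fin_succ_eq_det_submatrix, Matrix.adjugate_fin_succ_eq_det_submatrix]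
    simp only [hl, Fin.succAbove_zero, Fin.succAbove_last, Fin.val_zero, Fin.val_last]
    have e1 : ((-1 : R) ^ (n + 1 + (n + 1))) = 1 := Even.neg_one_pow ⟨n + 1, by ring⟩
    have e2 : ((-1 : R) ^ (n + 1 + 0)) * ((-1 : R) ^ (0 + (n + 1))) = 1 := by
      rw [← pow_add]; exact Even.neg_one_pow ⟨n + 1, by ring⟩
    rw [e1]
    simp only [Nat.add_zero, pow_zero, one_mul]
    linear_combination (-((A.submatrix Fin.castSucc Fin.succ).det *
      (A.submatrix Fin.succ Fin.castSucc).det)) * e2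
  have hblockC : C.submatrix (cornerEquiv n) (cornerEquiv n) =
      Matrix.fromBlocks 1
        (Matrix.of fun (i : Fin 2) (m : Fin n) =>
          C (cornerEquiv n (.inl i)) (cornerEquiv n (.inr m)))
        0
        (A.submatrix (fun k : Fin n => k.succ.castSucc) fun k => k.succ.castSucc) := by
    ext x y
    rcases x with i | k <;> rcases y with j | m
    · fin_cases i <;> fin_cases j <;>
        simp [hC, hl0, Ne.symm hl0, Matrix.one_apply, ← hl]
    · rfl
    · fin_cases j <;> simp [hC, hmid0 k, hmidl k, hl0, ← hl, -Fin.castSucc_succ]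
    · simp [hC, hmid0 m, hmidl m, -Fin.castSucc_succ]
  have hdetC : C.det =
      (A.submatrix (fun k : Fin n => k.succ.castSucc) (fun k : Fin n => k.succ.castSucc)).det := by
    rw [← Matrix.det_submatrix_equiv_self (cornerEquiv n) C, hblockC,
      Matrix.det_fromBlocks_zero₂₁, Matrix.det_one, one_mul]
  have hprod : ∏ j, d j = A.det * A.det := by
    have hdd : d = fun j => (if j = 0 then A.det else 1) * (if j = l then A.det else 1) := by
      funext j
      rcases eq_or_ne j 0 with rfl | h0
      · simp [hd, Ne.symm hl0]
      · rcases eq_or_ne j l with rfl | hjl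
        · simp [hd, h0]
        · simp [hd, h0, hjl]
    rw [hdd, Finset.prod_mul_distrib]
    simp [Finset.prod_ite_eq']
  have h1 := congrArg Matrix.det hAB
  rw [Matrix.det_mul, Matrix.det_mul, Matrix.det_diagonal, hprod, hdetB, hdetC] at h1
  linear_combination -h1

end DJ

lemma dj (n : ℕ) (A : Matrix (Fin (n + 2)) (Fin (n + 2)) ℂ) :
    A.det *
      (A.submatrix (fun k : Fin n => k.succ.castSucc) (fun k : Fin n => k.succ.castSucc)).det =
    (A.submatrix Fin.castSucc Fin.castSucc).det * (A.submatrix Fin.succ Fin.succ).det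
      - (A.submatrix Fin.castSucc Fin.succ).det * (A.submatrix Fin.succ Fin.castSucc).det := by
  set X : Matrix (Fin (n + 2)) (Fin (n + 2)) (MvPolynomial (Fin (n + 2) × Fin (n + 2)) ℤ) :=
    Matrix.of fun i j => MvPolynomial.X (i, j) with hXdef
  have hX : X.det ≠ 0 := by
    intro h
    have h2 := congrArg (MvPolynomial.eval
      (fun p : Fin (n + 2) × Fin (n + 2) => if p.1 = p.2 then (1 : ℤ) else 0)) h
    rw [map_zero, RingHom.map_det, RingHom.mapMatrix_apply] at h2
    have h3 : X.map (MvPolynomial.eval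
        (fun p : Fin (n + 2) × Fin (n + 2) => if p.1 = p.2 then (1 : ℤ) else 0)) = 1 := by
      ext i j
      simp [hXdef, Matrix.one_apply]
    rw [h3, Matrix.det_one] at h2
    exact one_ne_zero h2
  have hgen := mul_left_cancel₀ hX (dj_mul n X)
  let φ : MvPolynomial (Fin (n + 2) × Fin (n + 2)) ℤ →+* ℂ :=
    (MvPolynomial.eval₂Hom (Int.castRingHom ℂ) (fun p => A p.1 p.2))
  have hmap : X.map φ = A := by
    ext i j
    simp [hXdef, φ]
  have hsub : ∀ (k m : ℕ) (r c : Fin k → Fin m) (M : Matrix (Fin m) (Fin m)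
      (MvPolynomial (Fin (n + 2) × Fin (n + 2)) ℤ)),
      φ (M.submatrix r c).det = ((M.map φ).submatrix r c).det := by
    intro k m r c M
    rw [RingHom.map_det]
    rfl
  have h4 := congrArg φ hgen
  rw [_root_.map_mul, map_sub, _root_.map_mul, _root_.map_mul, RingHom.map_det,
    RingHom.mapMatrix_apply, hsub, hsub, hsub, hsub, hsub, hmap] at h4
  exact h4



theorem stmt11 (c : ℤ → ℂ) (ψ : ℤ → ℤ → ℂ)
    (h0 : ∀ n : ℤ, ψ n 0 = 1)
    (hneg : ∀ n N : ℤ, N < 0 → ψ n N = 0)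
    (hdet : ∀ n : ℤ, ∀ N : ℕ, 0 < N →
      ψ n N = Matrix.det (Matrix.of fun i j : Fin N => c (n - (i : ℕ) + (j : ℕ)))) :
    ∀ n N : ℤ, 0 ≤ N →
      ψ n (N + 1) * ψ n (N - 1) - (ψ n N) ^ 2 + ψ (n + 1) N * ψ (n - 1) N = 0 := by
  have hdet' : ∀ (n : ℤ) (N : ℕ),
      ψ n (N : ℤ) = (Matrix.of fun i j : Fin N => c (n - (i : ℕ) + (j : ℕ))).det := by
    intro n N
    rcases Nat.eq_zero_or_pos N with rfl | h
    · rw [Nat.cast_zero, h0]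
      exact (Matrix.det_fin_zero).symm
    · exact hdet n N h
  intro n N hN
  lift N to ℕ using hN with N
  cases N with
  | zero =>
    have h2 : ψ n (-1) = 0 := hneg n (-1) (by norm_num)
    norm_num [h0, h2]
  | succ k =>
    set A : Matrix (Fin (k + 2)) (Fin (k + 2)) ℂ :=
      Matrix.of fun i j => c (n - (i : ℕ) + (j : ℕ)) with hA
    have key := dj k A
    have eQP : (A.submatrix Fin.succ Fin.succ).det =
        (A.submatrix Fin.castSucc Fin.castSucc).det := by
      congr 1
      ext i j
      simp only [hA, Matrix.submatrix_apply, Matrix.of_apply, Fin.coe_castSucc, Fin.val_succ]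
      congr 1
      push_cast
      ring
    rw [eQP] at key
    have eA : ψ n (((k : ℤ) + 1) + 1) = A.det := by
      have h2 : ((k : ℤ) + 1) + 1 = ((k + 2 : ℕ) : ℤ) := by push_cast; ring

      rw [h2, hdet']
    have einner : ψ n (((k : ℤ) + 1) - 1) =
        (A.submatrix (fun t : Fin k => t.succ.castSucc) (fun t : Fin k => t.succ.castSucc)).det := by
      have h2 : ((k : ℤ) + 1) - 1 = ((k : ℕ) : ℤ) := by ring
      rw [h2, hdet']
      congr 1
      ext i j
      simp only [hA, Matrix.submatrix_apply, Matrix.of_apply, Fin.coe_castSucc, Fin.val_succ]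
      congr 1
      push_cast
      ring
    have eP : ψ n ((k : ℤ) + 1) = (A.submatrix Fin.castSucc Fin.castSucc).det := by
      have h2 : ((k : ℤ) + 1) = ((k + 1 : ℕ) : ℤ) := by push_cast; ring
      rw [h2, hdet']
      congr 1
    have eR : ψ (n + 1) ((k : ℤ) + 1) = (A.submatrix Fin.castSucc Fin.succ).det := by
      have h2 : ((k : ℤ) + 1) = ((k + 1 : ℕ) : ℤ) := by push_cast; ring
      rw [h2, hdet']
      congr 1
      ext i j
      simp only [hA, Matrix.submatrix_apply, Matrix.of_apply, Fin.coe_castSucc, Fin.val_succ]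
      congr 1
      push_cast
      ring
    have eS : ψ (n - 1) ((k : ℤ) + 1) = (A.submatrix Fin.succ Fin.castSucc).det := by
      have h2 : ((k : ℤ) + 1) = ((k + 1 : ℕ) : ℤ) := by push_cast; ring
      rw [h2, hdet']
      congr 1
      ext i j
      simp only [hA, Matrix.submatrix_apply, Matrix.of_apply, Fin.coe_castSucc, Fin.val_succ]
      congr 1
      push_cast
      ring
    push_cast
    rw [eA, einner, eP, eR, eS]
    linear_combination key
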